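/- Let I ⊆ ℝ[x₀,…,x_n] be a homogeneous ideal, let d ≥ 1 and k ∈ ℕ. For a linear form ℓ ∈ ℝ[x₀,…,x_n]₁, let Q(ℓ) = dim_ℝ( ℝ[x₀,…,x_n]_d / (I_d + ℓ·ℝ[x₀,…,x_n]_{d−1}) ), where I_d denotes the degree-d graded piece of I, ℝ[x₀,…,x_n]_d the space of degree-d forms, and ℓ·ℝ[x₀,…,x_n]_{d−1} the space of multiples of ℓ of degree d. If (ℓ_j)_{j∈ℕ} is a sequence of linear forms converging coefficient-wise to a linear form ℓ and Q(ℓ_j) ≥ k for all j, then Q(ℓ) ≥ k. -/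

import Mathlib

open scoped BigOperators
open MvPolynomial

/-- The codimension, in the space of degree-`d` forms, of `I_d + ℓ·ℝ[x]_{d-1}`:
`Q(ℓ) = dim_ℝ ( ℝ[x₀,…,x_n]_d / (I_d + ℓ·ℝ[x₀,…,x_n]_{d-1}) )`, where the linear form `ℓ`
has coefficient vector `a`. -/
noncomputable def hyperplaneSectionLength (n d : ℕ)
    (I : Ideal (MvPolynomial (Fin (n + 1)) ℝ)) (a : Fin (n + 1) → ℝ) : ℕ :=
  Module.finrank ℝ
    (↥(homogeneousSubmodule (Fin (n + 1)) ℝ d) ⧸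
      (Submodule.comap (homogeneousSubmodule (Fin (n + 1)) ℝ d).subtype
          (Submodule.restrictScalars ℝ I) ⊔
        Submodule.comap (homogeneousSubmodule (Fin (n + 1)) ℝ d).subtype
          (Submodule.map (LinearMap.mulLeft ℝ (∑ i, C (a i) * X i))
            (homogeneousSubmodule (Fin (n + 1)) ℝ (d - 1)))))

namespace Statement15Aux

open Submodule Module Filter

noncomputable section

/-- Finite-dimensionality of the degree-`d` graded piece. -/
instance homog_fd (n d : ℕ) :
    FiniteDimensional ℝ (homogeneousSubmodule (Fin (n + 1)) ℝ d) :=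
  Submodule.finiteDimensional_of_le
    (S₂ := restrictTotalDegree (Fin (n + 1)) ℝ d)
    (fun p hp => by
      rw [mem_restrictTotalDegree]
      exact MvPolynomial.IsHomogeneous.totalDegree_le hp)

/-- The linear form with coefficient vector `a`. -/
def ell (n : ℕ) (a : Fin (n + 1) → ℝ) : MvPolynomial (Fin (n + 1)) ℝ :=
  ∑ i, C (a i) * X i

lemma ell_isHomog (n : ℕ) (a : Fin (n + 1) → ℝ) :
    MvPolynomial.IsHomogeneous (ell n a) 1 :=
  MvPolynomial.IsHomogeneous.sum _ _ _ fun i _ => isHomogeneous_C_mul_X _ _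

/-- The subspace `I_d + ℓ_a·ℝ[x]_{d-1}` inside the degree-`d` forms. -/
def Ssub (n d : ℕ) (I : Ideal (MvPolynomial (Fin (n + 1)) ℝ)) (a : Fin (n + 1) → ℝ) :
    Submodule ℝ (homogeneousSubmodule (Fin (n + 1)) ℝ d) :=
  Submodule.comap (homogeneousSubmodule (Fin (n + 1)) ℝ d).subtype
      (Submodule.restrictScalars ℝ I) ⊔
    Submodule.comap (homogeneousSubmodule (Fin (n + 1)) ℝ d).subtype
      (Submodule.map (LinearMap.mulLeft ℝ (∑ i, C (a i) * X i))
        (homogeneousSubmodule (Fin (n + 1)) ℝ (d - 1)))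

lemma hsl_eq (n d : ℕ) (I : Ideal (MvPolynomial (Fin (n + 1)) ℝ)) (a : Fin (n + 1) → ℝ) :
    hyperplaneSectionLength n d I a =
      Module.finrank ℝ (↥(homogeneousSubmodule (Fin (n + 1)) ℝ d) ⧸ Ssub n d I a) := rfl

/-- Abstract semicontinuity of dimension for a family of subspaces generated by
constant vectors together with vectors depending linearly on a parameter. -/
lemma abstract_semicont {V : Type} [AddCommGroup V] [Module ℝ V] [FiniteDimensional ℝ V]
    {m : ℕ} {ι κ : Type} [Fintype ι] [Fintype κ]
    (S : (Fin m → ℝ) → Submodule ℝ V) (c : ι → V) (w : κ → Fin m → V)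
    (aj : ℕ → (Fin m → ℝ)) (a : Fin m → ℝ)
    (hconv : ∀ i, Filter.Tendsto (fun j => aj j i) Filter.atTop (nhds (a i)))
    (hmem : ∀ a' i, Sum.elim c (fun t => ∑ s, a' s • w t s) i ∈ S a')
    (hspan : S a ≤ Submodule.span ℝ
      (Set.range (Sum.elim c fun t => ∑ s, a s • w t s))) :
    ∃ j, Module.finrank ℝ (S a) ≤ Module.finrank ℝ (S (aj j)) := by
  classical
  set u : (Fin m → ℝ) → ι ⊕ κ → V := fun a' => Sum.elim c fun t => ∑ s, a' s • w t s with hu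
  obtain ⟨b, hbsub, hbspan, hbind⟩ := exists_linearIndependent ℝ (Set.range (u a))
  haveI hbfinite : Finite b := hbind.finite
  haveI : Fintype b := Fintype.ofFinite _
  have hr : Module.finrank ℝ (S a) ≤ Fintype.card b := by
    have h1 : Module.finrank ℝ (S a) ≤ Module.finrank ℝ (Submodule.span ℝ b) := by
      apply Submodule.finrank_mono
      rw [hbspan]
      exact hspan
    rwa [finrank_span_set_eq_card hbind, Set.toFinset_card] at h1
  have hchoice : ∀ x : b, ∃ i, u a i = (x : V) := fun x => hbsub x.2
  choose idx hidx using hchoice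
  -- dual functionals
  obtain ⟨Q, hQ⟩ := Submodule.exists_isCompl (Submodule.span ℝ (Set.range ((↑) : b → V)))
  let π := Submodule.projectionOnto _ Q hQ
  let bb : Basis b ℝ (Submodule.span ℝ (Set.range ((↑) : b → V))) := Basis.span hbind
  let φ : b → (V →ₗ[ℝ] ℝ) := fun x => bb.coord x ∘ₗ π
  have hφ : ∀ x y : b, φ x (y : V) = if y = x then 1 else 0 := by
    intro x y
    have hymem : (y : V) ∈ Submodule.span ℝ (Set.range ((↑) : b → V)) :=
      Submodule.subset_span ⟨y, rfl⟩
    have hπ : π (y : V) = bb y := by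
      have h3 := Submodule.linearProjOfIsCompl_apply_left hQ ⟨(y : V), hymem⟩
      have h4 : (⟨(y : V), hymem⟩ :
          Submodule.span ℝ (Set.range ((↑) : b → V))) = bb y := by
        apply Subtype.ext
        rw [Basis.span_apply]
      rw [show π (y : V) = π ((⟨(y : V), hymem⟩ :
          Submodule.span ℝ (Set.range ((↑) : b → V))) : V) from rfl]
      exact h3.trans h4
    simp only [φ, LinearMap.coe_comp, Function.comp_apply, hπ, Basis.coord_apply,
      Basis.repr_self, Finsupp.single_apply]
  -- the matrix of functionals applied to the moving generators
  let A : (Fin m → ℝ) → Matrix b b ℝ := fun a' =>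
    Matrix.of fun x y => φ x (u a' (idx y))
  have hAa : A a = 1 := by
    ext x y
    rw [Matrix.one_apply]
    show φ x (u a (idx y)) = _
    rw [hidx y, hφ x y]
    by_cases h : x = y <;> simp [h, eq_comm]
  -- convergence of the matrices
  have hA : Filter.Tendsto (fun j => A (aj j)) Filter.atTop (nhds (A a)) := by
    refine tendsto_pi_nhds.mpr ?_
    intro x
    rw [tendsto_pi_nhds]
    intro y
    show Filter.Tendsto (fun j => φ x (u (aj j) (idx y))) Filter.atTop (nhds (φ x (u a (idx y))))
    rcases h : idx y with i | t
    · exact tendsto_const_nhds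
    · have heval : ∀ a' : Fin m → ℝ, φ x (u a' (Sum.inr t)) =
          ∑ s, a' s * φ x (w t s) := by
        intro a'
        show φ x (∑ s, a' s • w t s) = _
        rw [map_sum]
        refine Finset.sum_congr rfl fun s _ => ?_
        rw [map_smul, smul_eq_mul]
      simp only [heval]
      exact tendsto_finset_sum _ fun s _ => (hconv s).mul_const _
  -- the determinant converges to 1, hence is eventually nonzero
  have hdet : Filter.Tendsto (fun j => (A (aj j)).det) Filter.atTop (nhds 1) := by
    have hc : Continuous fun M : Matrix b b ℝ => M.det := continuous_id.matrix_det
    have h5 := (hc.tendsto (A a)).comp hA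
    rwa [hAa, Matrix.det_one] at h5
  obtain ⟨j, hj⟩ := (hdet.eventually_ne one_ne_zero).exists
  refine ⟨j, ?_⟩
  have hunit : IsUnit (A (aj j)) :=
    (Matrix.isUnit_iff_isUnit_det _).mpr (isUnit_iff_ne_zero.mpr hj)
  have hcols := Matrix.linearIndependent_cols_iff_isUnit.mpr hunit
  let v : b → V := fun y => u (aj j) (idx y)
  have hvind : LinearIndependent ℝ v := by
    apply LinearIndependent.of_comp (LinearMap.pi (fun x : b => φ x))
    have h6 : ⇑(LinearMap.pi (fun x : b => φ x)) ∘ v =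
        fun y : b => (A (aj j)).transpose y := by
      funext y x
      rfl
    rw [h6]
    exact hcols
  have hle : Submodule.span ℝ (Set.range v) ≤ S (aj j) := by
    rw [Submodule.span_le]
    rintro _ ⟨y, rfl⟩
    exact hmem _ _
  calc Module.finrank ℝ (S a) ≤ Fintype.card b := hr
    _ = Module.finrank ℝ (Submodule.span ℝ (Set.range v)) := (finrank_span_eq_card hvind).symm
    _ ≤ Module.finrank ℝ (S (aj j)) := Submodule.finrank_mono hle

set_option synthInstance.maxHeartbeats 1000000 in
set_option maxHeartbeats 1000000 in
/-- Key semicontinuity step: the dimension of `I_d + ℓ·ℝ[x]_{d-1}` at the limit is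
attained (at least) at some term of the sequence. -/
lemma key (n d : ℕ) (hd : 1 ≤ d) (I : Ideal (MvPolynomial (Fin (n + 1)) ℝ))
    (aj : ℕ → (Fin (n + 1) → ℝ)) (a : Fin (n + 1) → ℝ)
    (hconv : ∀ i, Filter.Tendsto (fun j => aj j i) Filter.atTop (nhds (a i))) :
    ∃ j, Module.finrank ℝ (Ssub n d I a) ≤ Module.finrank ℝ (Ssub n d I (aj j)) := by
  classical
  set W := homogeneousSubmodule (Fin (n + 1)) ℝ d with hW
  set H1 := homogeneousSubmodule (Fin (n + 1)) ℝ (d - 1) with hH1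
  have hℓhom : ∀ a' : Fin (n+1) → ℝ,
      MvPolynomial.IsHomogeneous (∑ i, C (a' i) * X i : MvPolynomial (Fin (n+1)) ℝ) 1 :=
    fun a' => ell_isHomog n a'
  have hmulW : ∀ (a' : Fin (n+1) → ℝ) (q : MvPolynomial (Fin (n+1)) ℝ), q ∈ H1 →
      (∑ i, C (a' i) * X i) * q ∈ W := by
    intro a' q hq
    have h2 := (hℓhom a').mul (show MvPolynomial.IsHomogeneous q (d-1) from hq)
    have h1 : 1 + (d - 1) = d := by omega
    rw [h1] at h2
    exact h2
  set J := Submodule.comap W.subtype (Submodule.restrictScalars ℝ I) with hJdef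
  haveI : Module.Free ℝ J := Module.Free.of_divisionRing ℝ ↥J
  haveI : Module.Free ℝ H1 := Module.Free.of_divisionRing ℝ ↥H1
  let bJ := Module.finBasis ℝ J
  haveI : FiniteDimensional ℝ H1 := homog_fd n (d-1)
  let bC := Module.finBasis ℝ H1
  let g : (Fin (n+1) → ℝ) → Fin (finrank ℝ H1) → W :=
    fun a' t => ⟨(∑ i, C (a' i) * X i) * (bC t : MvPolynomial (Fin (n+1)) ℝ), hmulW a' _ (bC t).2⟩
  let u : (Fin (n+1) → ℝ) → (Fin (finrank ℝ J) ⊕ Fin (finrank ℝ H1)) → W :=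
    fun a' => Sum.elim (fun i => (bJ i : W)) (g a')
  have humem : ∀ a' i, u a' i ∈ Ssub n d I a' := by
    rintro a' (i | t)
    · exact Submodule.mem_sup_left (bJ i).2
    · exact Submodule.mem_sup_right
        (Submodule.mem_comap.mpr
          (Submodule.mem_map.mpr ⟨(bC t : MvPolynomial (Fin (n+1)) ℝ), (bC t).2, rfl⟩))
  have hmaple : Submodule.map (LinearMap.mulLeft ℝ (∑ i, C (a i) * X i)) H1 ≤ W := by
    rintro x hx
    obtain ⟨y, hy, rfl⟩ := Submodule.mem_map.mp hx
    exact hmulW a y hy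
  have hspan : Submodule.span ℝ (Set.range (u a)) = Ssub n d I a := by
    apply Submodule.map_injective_of_injective (Submodule.injective_subtype W)
    rw [Submodule.map_span]
    have hJspan : Submodule.span ℝ (Set.range fun i => (bJ i : W)) = J := by
      have h1 : Submodule.span ℝ (Set.range fun i => (bJ i : W)) =
          Submodule.map J.subtype (Submodule.span ℝ (Set.range bJ)) := by
        rw [Submodule.map_span, ← Set.range_comp]; rfl
      rw [h1, bJ.span_eq, Submodule.map_subtype_top]
    have hH1span : Submodule.span ℝ
        (Set.range fun t => (bC t : MvPolynomial (Fin (n+1)) ℝ)) = H1 := by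
      have h1 : Submodule.span ℝ (Set.range fun t => (bC t : MvPolynomial (Fin (n+1)) ℝ)) =
          Submodule.map H1.subtype (Submodule.span ℝ (Set.range bC)) := by
        rw [Submodule.map_span, ← Set.range_comp]; rfl
      rw [h1, bC.span_eq, Submodule.map_subtype_top]
    have hrange : W.subtype '' Set.range (u a) =
        (Set.range fun i => ((bJ i : W) : MvPolynomial (Fin (n+1)) ℝ)) ∪
          (Set.range fun t => (∑ i, C (a i) * X i) * (bC t : MvPolynomial (Fin (n+1)) ℝ)) := by
      rw [← Set.range_comp]
      have h2 : (W.subtype ∘ u a) = Sum.elim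
          (fun i => ((bJ i : W) : MvPolynomial (Fin (n+1)) ℝ))
          (fun t => (∑ i, C (a i) * X i) * (bC t : MvPolynomial (Fin (n+1)) ℝ)) := by
        funext i; cases i <;> rfl
      rw [h2, Set.Sum.elim_range]
    rw [hrange, Submodule.span_union]
    have hleft : Submodule.span ℝ
        (Set.range fun i => ((bJ i : W) : MvPolynomial (Fin (n+1)) ℝ)) =
          Submodule.map W.subtype J := by
      conv_rhs => rw [← hJspan]
      rw [Submodule.map_span, ← Set.range_comp]; rfl
    have hright : Submodule.span ℝ
        (Set.range fun t => (∑ i, C (a i) * X i) * (bC t : MvPolynomial (Fin (n+1)) ℝ)) =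
          Submodule.map (LinearMap.mulLeft ℝ (∑ i, C (a i) * X i)) H1 := by
      conv_rhs => rw [← hH1span]
      rw [Submodule.map_span, ← Set.range_comp]; rfl
    rw [hleft, hright]
    show _ = Submodule.map W.subtype (Ssub n d I a)
    rw [Ssub, Submodule.map_sup, Submodule.map_comap_subtype, Submodule.map_comap_subtype,
      inf_eq_right.mpr hmaple]
  -- membership of X s * (basis of H1) in W
  have hXmem : ∀ (t : Fin (finrank ℝ H1)) (s : Fin (n+1)),
      X s * (bC t : MvPolynomial (Fin (n+1)) ℝ) ∈ W := by
    intro t s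
    have h2 := (isHomogeneous_X ℝ s).mul
      (show MvPolynomial.IsHomogeneous (bC t : MvPolynomial (Fin (n+1)) ℝ) (d-1) from (bC t).2)
    have h1 : 1 + (d - 1) = d := by omega
    rw [h1] at h2
    exact h2
  let w : Fin (finrank ℝ H1) → Fin (n+1) → W :=
    fun t s => ⟨X s * (bC t : MvPolynomial (Fin (n+1)) ℝ), hXmem t s⟩
  have hdecomp : ∀ (a' : Fin (n+1) → ℝ) (t : Fin (finrank ℝ H1)),
      g a' t = ∑ s, a' s • w t s := by
    intro a' t
    apply Subtype.ext
    push_cast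
    show (∑ i, C (a' i) * X i) * (bC t : MvPolynomial (Fin (n+1)) ℝ) =
      ∑ s, a' s • (X s * (bC t : MvPolynomial (Fin (n+1)) ℝ))
    rw [Finset.sum_mul]
    refine Finset.sum_congr rfl fun s _ => ?_
    rw [MvPolynomial.smul_eq_C_mul, mul_assoc]
  have huelim : ∀ a' : Fin (n+1) → ℝ,
      Sum.elim (fun i => (bJ i : W)) (fun t => ∑ s, a' s • w t s) = u a' := by
    intro a'
    funext i
    cases i with
    | inl i => rfl
    | inr t => exact (hdecomp a' t).symm
  refine abstract_semicont (Ssub n d I) (fun i => (bJ i : W)) w aj a hconv ?_ ?_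
  · intro a' i
    rw [huelim a']
    exact humem a' i
  · rw [huelim a, hspan]

end

end Statement15Aux

/-- Semicontinuity: ... -/
theorem statement15 (n d k : ℕ) (hd : 1 ≤ d)
    (I : Ideal (MvPolynomial (Fin (n + 1)) ℝ))
    (hhom : ∀ f ∈ I, ∀ e : ℕ, (homogeneousComponent e f) ∈ I)
    (aj : ℕ → (Fin (n + 1) → ℝ)) (a : Fin (n + 1) → ℝ)
    (hconv : ∀ i, Filter.Tendsto (fun j => aj j i) Filter.atTop (nhds (a i)))
    (hk : ∀ j, k ≤ hyperplaneSectionLength n d I (aj j)) :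
    k ≤ hyperplaneSectionLength n d I a := by
  obtain ⟨j, hj⟩ := Statement15Aux.key n d hd I aj a hconv
  have hq1 := Submodule.finrank_quotient_add_finrank (Statement15Aux.Ssub n d I a)
  have hq2 := Submodule.finrank_quotient_add_finrank (Statement15Aux.Ssub n d I (aj j))
  have hk' := hk j
  rw [Statement15Aux.hsl_eq] at hk' ⊢
  omega
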